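/- Let R be a ring, let C be a cochain complex of R-modules, and let f : C → C be a chain map. Let D = ⊕_{k ∈ ℕ} C be the degreewise countable direct sum of copies of C, and let Ψ : D → D be the chain map whose component from the k-th summand to the k-th summand is f and whose component from the k-th summand to the (k+1)-st summand is −id_C, all other components being zero. Then the inclusion of C as the 0-th summand of D inside the mapping cone of Ψ is a homotopy equivalence C → Cone(Ψ); moreover, the endomorphism u of Cone(Ψ) induced by shifting every summand (both in the shifted and unshifted copy of D) from index k to index k+1 satisfies: u composed with this inclusion is chain homotopic to the inclusion composed with f. -/

import Mathlib

open CategoryTheory CategoryTheory.Limits CochainComplex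

variable {R : Type} [Ring R]

/-- The degreewise countable direct sum `D = ⊕_{k ∈ ℕ} C` of copies of a cochain
complex `C` of `R`-modules. -/
noncomputable def Dsum (C : CochainComplex (ModuleCat R) ℤ) : CochainComplex (ModuleCat R) ℤ :=
  ∐ (fun _ : ℕ => C)

/-- The chain map `Ψ : D ⟶ D` whose component from the `k`-th summand to the `k`-th
summand is `f`, and whose component from the `k`-th summand to the `(k+1)`-st summand
is `-id`. -/
noncomputable def Psi (C : CochainComplex (ModuleCat R) ℤ) (f : C ⟶ C) : Dsum C ⟶ Dsum C :=
  Sigma.desc (fun k => f ≫ Sigma.ι (fun _ : ℕ => C) k - Sigma.ι (fun _ : ℕ => C) (k + 1))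

/-- The inclusion of `C` as the `0`-th summand of `D` inside the mapping cone of `Ψ`. -/
noncomputable def incl (C : CochainComplex (ModuleCat R) ℤ) (f : C ⟶ C) :
    C ⟶ mappingCone (Psi C f) :=
  Sigma.ι (fun _ : ℕ => C) 0 ≫ mappingCone.inr (Psi C f)

/-- The shift endomorphism of `D` sending the `k`-th summand identically
to the `(k+1)`-st summand. -/
noncomputable def shiftD (C : CochainComplex (ModuleCat R) ℤ) : Dsum C ⟶ Dsum C :=
  Sigma.desc (fun k => Sigma.ι (fun _ : ℕ => C) (k + 1))

lemma shiftD_comm (C : CochainComplex (ModuleCat R) ℤ) (f : C ⟶ C) :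
    Psi C f ≫ shiftD C = shiftD C ≫ Psi C f := by
  apply Limits.Sigma.hom_ext
  intro k
  first
  | simp [Psi, shiftD, Dsum]
  | (dsimp only [Psi, shiftD, Dsum]
     rw [← Category.assoc, ← Category.assoc]
     erw [Limits.Sigma.ι_desc, Limits.Sigma.ι_desc]
     rw [Preadditive.sub_comp, Category.assoc]
     erw [Limits.Sigma.ι_desc, Limits.Sigma.ι_desc, Limits.Sigma.ι_desc])

/-- The endomorphism `u` of `Cone(Ψ)` induced by shifting every summand (in both the
shifted and unshifted copy of `D`) from index `k` to index `k + 1`. -/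
noncomputable def uEndo (C : CochainComplex (ModuleCat R) ℤ) (f : C ⟶ C) :
    mappingCone (Psi C f) ⟶ mappingCone (Psi C f) :=
  mappingCone.map (Psi C f) (Psi C f) (shiftD C) (shiftD C) (shiftD_comm C f)


namespace St10Aux

variable (C : CochainComplex (ModuleCat R) ℤ) (f : C ⟶ C)

/-- inclusion of `k`-th summand -/
noncomputable abbrev jj (k : ℕ) : C ⟶ Dsum C := Sigma.ι (fun _ : ℕ => C) k

/-- `k`-fold composition of `f` -/
noncomputable def fpow : ℕ → (C ⟶ C)
  | 0 => 𝟙 C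
  | (k+1) => f ≫ fpow k

@[simp] lemma fpow_zero : fpow C f 0 = 𝟙 C := rfl
@[simp] lemma fpow_succ (k : ℕ) : fpow C f (k+1) = f ≫ fpow C f k := rfl

lemma fpow_comm (k : ℕ) : f ≫ fpow C f k = fpow C f k ≫ f := by
  induction k with
  | zero => simp
  | succ n ih =>
    rw [fpow_succ]
    conv_lhs => rw [ih]
    rw [Category.assoc]

lemma fpow_succ' (k : ℕ) : fpow C f (k+1) = fpow C f k ≫ f := by
  rw [fpow_succ, fpow_comm]

noncomputable def piD : Dsum C ⟶ C := Sigma.desc (fun k => fpow C f k)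

noncomputable def sigmaD : Dsum C ⟶ Dsum C :=
  Sigma.desc (fun j => -∑ i ∈ Finset.range j, fpow C f i ≫ jj C (j - 1 - i))

@[simp] lemma jj_Psi (k : ℕ) : jj C k ≫ Psi C f = f ≫ jj C k - jj C (k+1) := by
  simp only [Psi, jj]; exact Limits.Sigma.ι_desc _ _

@[simp] lemma jj_piD (k : ℕ) : jj C k ≫ piD C f = fpow C f k := by
  simp only [piD, jj]; exact Limits.Sigma.ι_desc _ _

@[simp] lemma jj_sigmaD (k : ℕ) :
    jj C k ≫ sigmaD C f = -∑ i ∈ Finset.range k, fpow C f i ≫ jj C (k - 1 - i) := by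
  simp only [sigmaD, jj]; exact Limits.Sigma.ι_desc _ _

lemma Psi_piD : Psi C f ≫ piD C f = 0 := by
  apply Limits.Sigma.hom_ext
  intro k
  refine (Category.assoc _ _ _).symm.trans ?_
  show (jj C k ≫ Psi C f) ≫ piD C f = jj C k ≫ 0
  simp [Preadditive.sub_comp]

lemma Psi_sigmaD : Psi C f ≫ sigmaD C f = 𝟙 _ := by
  apply Limits.Sigma.hom_ext
  intro k
  refine (Category.assoc _ _ _).symm.trans ?_
  show (jj C k ≫ Psi C f) ≫ sigmaD C f = jj C k ≫ 𝟙 _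
  rw [Category.comp_id, jj_Psi, Preadditive.sub_comp, Category.assoc, jj_sigmaD, jj_sigmaD,
    Finset.sum_range_succ']
  have h1 : ∑ i ∈ Finset.range k, fpow C f (i+1) ≫ jj C (k + 1 - 1 - (i+1))
      = ∑ i ∈ Finset.range k, f ≫ fpow C f i ≫ jj C (k - 1 - i) :=
    Finset.sum_congr rfl (fun i _ => by
      have e : k + 1 - 1 - (i+1) = k - 1 - i := by omega
      rw [fpow_succ, Category.assoc, e])
  rw [h1]
  simp only [Preadditive.comp_neg, Preadditive.comp_sum, fpow_zero, Category.id_comp,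
    Nat.add_sub_cancel, Nat.sub_zero]
  simp only [← Category.assoc]
  abel

lemma sigmaD_Psi : sigmaD C f ≫ Psi C f = 𝟙 _ - piD C f ≫ jj C 0 := by
  apply Limits.Sigma.hom_ext
  intro k
  refine (Category.assoc _ _ _).symm.trans ?_
  show (jj C k ≫ sigmaD C f) ≫ Psi C f = jj C k ≫ (𝟙 _ - piD C f ≫ jj C 0)
  rw [jj_sigmaD, Preadditive.neg_comp, Preadditive.sum_comp]
  have step : ∀ i ∈ Finset.range k,
      (fpow C f i ≫ jj C (k - 1 - i)) ≫ Psi C f =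
        fpow C f (i+1) ≫ jj C (k - (i+1)) - fpow C f i ≫ jj C (k - i) := by
    intro i hi
    simp only [Finset.mem_range] at hi
    have e1 : k - 1 - i = k - (i+1) := by omega
    have e2 : k - 1 - i + 1 = k - i := by omega
    rw [Category.assoc, jj_Psi, Preadditive.comp_sub, e2, ← Category.assoc,
      ← fpow_succ', e1]
  rw [Finset.sum_congr rfl step,
    Finset.sum_range_sub (fun i => fpow C f i ≫ jj C (k - i)) ]
  simp only [Nat.sub_self, Nat.sub_zero, fpow_zero, Category.id_comp]
  simp only [Preadditive.comp_sub, Category.comp_id, ← Category.assoc, jj_piD]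
  abel

open CochainComplex.HomComplex

noncomputable def pD : mappingCone (Psi C f) ⟶ C :=
  mappingCone.desc (Psi C f) 0 (piD C f) (by rw [Psi_piD]; simp)

lemma incl_pD : incl C f ≫ pD C f = 𝟙 C := by
  rw [incl, pD]
  show (jj C 0 ≫ mappingCone.inr (Psi C f)) ≫ _ = _
  rw [Category.assoc, mappingCone.inr_desc]
  exact jj_piD C f 0

noncomputable def hcoch : Cochain (mappingCone (Psi C f)) (mappingCone (Psi C f)) (-1) :=
  (mappingCone.snd (Psi C f)).comp
    ((Cochain.ofHom (sigmaD C f)).comp (mappingCone.inl (Psi C f)) (zero_add (-1)))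
    (zero_add (-1))

lemma key : Cochain.ofHom (𝟙 (mappingCone (Psi C f))) =
    δ (-1) 0 (hcoch C f) + Cochain.ofHom (pD C f ≫ incl C f) := by
  have hz : δ (-1) 0 ((Cochain.ofHom (sigmaD C f)).comp (mappingCone.inl (Psi C f)) (zero_add (-1)))
      = Cochain.ofHom (mappingCone.inr (Psi C f))
        - Cochain.ofHom ((piD C f ≫ jj C 0) ≫ mappingCone.inr (Psi C f)) := by
    rw [δ_zero_cochain_comp _ _ _ (neg_add_cancel 1), δ_ofHom, mappingCone.δ_inl]
    simp only [Cochain.zero_comp, smul_zero, add_zero]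
    rw [← Cochain.ofHom_comp, ← Category.assoc, sigmaD_Psi]
    rw [Preadditive.sub_comp, Category.id_comp, Cochain.ofHom_sub]
  rw [← mappingCone.id (Psi C f), hcoch,
    δ_zero_cochain_comp _ _ _ (neg_add_cancel 1), hz, mappingCone.δ_snd]
  have hpincl : Cochain.ofHom (pD C f ≫ incl C f)
      = (mappingCone.snd (Psi C f)).comp
          (Cochain.ofHom ((piD C f ≫ jj C 0) ≫ mappingCone.inr (Psi C f))) (add_zero 0) := by
    rw [Cochain.ofHom_comp, pD, mappingCone.ofHom_desc, mappingCone.descCochain,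
      Cochain.comp_zero, zero_add, Cochain.comp_assoc_of_second_is_zero_cochain,
      ← Cochain.ofHom_comp,
      show piD C f ≫ incl C f = (piD C f ≫ jj C 0) ≫ mappingCone.inr (Psi C f) from by
        rw [incl, Category.assoc]; rfl]
  rw [hpincl]
  simp only [Cochain.comp_sub, Cochain.neg_comp, Units.neg_smul, neg_neg,
    show ((-1 : ℤ)).negOnePow = -1 from by simp [Int.negOnePow_neg, Int.negOnePow_one],
    one_smul, smul_neg, neg_smul]
  rw [Cochain.comp_assoc_of_second_is_zero_cochain,
    ← Cochain.comp_assoc_of_first_is_zero_cochain, ← Cochain.ofHom_comp, Psi_sigmaD,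
    Cochain.id_comp]
  abel

lemma incl_u : incl C f ≫ uEndo C f = jj C 1 ≫ mappingCone.inr (Psi C f) := by
  rw [incl, uEndo, mappingCone.map]
  show (jj C 0 ≫ mappingCone.inr (Psi C f)) ≫ _ = _
  rw [Category.assoc, mappingCone.inr_desc, ← Category.assoc]
  congr 1
  simp only [shiftD, jj]; exact Limits.Sigma.ι_desc _ _

noncomputable def z2 : Cochain C (mappingCone (Psi C f)) (-1) :=
  -((Cochain.ofHom (jj C 0)).comp (mappingCone.inl (Psi C f)) (zero_add (-1)))

lemma key2 : Cochain.ofHom (incl C f ≫ uEndo C f) =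
    δ (-1) 0 (z2 C f) + Cochain.ofHom (f ≫ incl C f) := by
  rw [incl_u, z2, δ_neg, δ_zero_cochain_comp _ _ _ (neg_add_cancel 1), δ_ofHom,
    mappingCone.δ_inl]
  simp only [Cochain.zero_comp, smul_zero, add_zero, ← Cochain.ofHom_comp]
  rw [← Category.assoc, jj_Psi, Preadditive.sub_comp, Cochain.ofHom_sub,
    show f ≫ incl C f = (f ≫ jj C 0) ≫ mappingCone.inr (Psi C f) from by
      rw [incl, Category.assoc]; rfl]
  abel


end St10Aux

/-- Let `C` be a cochain complex of `R`-modules, `f : C ⟶ C` a chain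
map, `D = ⊕_{k ∈ ℕ} C`, and `Ψ : D ⟶ D` the map with diagonal components `f` and
components `-id` from the `k`-th to the `(k+1)`-st summand.  Then the inclusion of `C`
as the `0`-th summand inside `Cone(Ψ)` is a homotopy equivalence, and the shift
endomorphism `u` of `Cone(Ψ)` satisfies `incl ≫ u ≃ f ≫ incl` up to chain homotopy. -/
theorem statement10 (C : CochainComplex (ModuleCat R) ℤ) (f : C ⟶ C) :
    (∃ e : HomotopyEquiv C (mappingCone (Psi C f)), e.hom = incl C f) ∧
      Nonempty (Homotopy (incl C f ≫ uEndo C f) (f ≫ incl C f)) := by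
  refine ⟨⟨{ hom := incl C f,
             inv := St10Aux.pD C f,
             homotopyHomInvId := Homotopy.ofEq (St10Aux.incl_pD C f),
             homotopyInvHomId :=
               ((HomComplex.Cochain.equivHomotopy _ _).symm
                 ⟨St10Aux.hcoch C f, St10Aux.key C f⟩).symm }, rfl⟩,
    ⟨(HomComplex.Cochain.equivHomotopy _ _).symm ⟨St10Aux.z2 C f, St10Aux.key2 C f⟩⟩⟩
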